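/- Let μ₁, μ₂, μ₃ be complex numbers with Re(μ₁) > Re(μ₂) > Re(μ₃), and let y₁, y₂ be real. Then ∫_{ℝ³} (1+u₂²+u₃²)^{(-1+μ₃-μ₂)/2} · (1+u₁²+(u₃-u₁u₂)²)^{(-1+μ₂-μ₁)/2} · e(-y₁u₁ - y₂u₂) du₁du₂du₃ = ∫_{ℝ³} (1+u₁²)^{(-1+μ₂-μ₁)/2} · (1+u₂²)^{(-1+μ₃-μ₂)/2} · (1+u₃²)^{(-1+μ₃-μ₁)/2} · e( -y₁u₁·√(1+u₃²)/√(1+u₂²) - y₁·u₂u₃/√(1+u₂²) - y₂u₂ ) du₁du₂du₃, and both integrals converge absolutely. -/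

import Mathlib

open MeasureTheory

/-! Auxiliary lemmas for the Jacquet–Whittaker substitution identity. -/

private lemma JW_int1d {r : ℝ} (hr : r < -(1/2)) :
    Integrable fun x : ℝ => (1 + x ^ 2) ^ r := by
  have h : (Module.finrank ℝ ℝ : ℝ) < -(2*r) := by
    simp only [Module.finrank_self, Nat.cast_one]; linarith
  have H := integrable_rpow_neg_one_add_norm_sq (E := ℝ) (μ := volume) h
  convert H using 2 with x
  norm_num

private lemma JW_core {F : (ℝ × ℝ) × ℝ → ℂ} (hF : Continuous F)
    {a b : ℝ × ℝ → ℝ} (ha : Continuous a) (hb : Continuous b) (hpos : ∀ w, 0 < a w) :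
    (Integrable (fun u : (ℝ × ℝ) × ℝ => (a u.1 : ℂ) * F (u.1, a u.1 * u.2 + b u.1)) ↔
      Integrable F) ∧
    (∫ u : (ℝ × ℝ) × ℝ, (a u.1 : ℂ) * F (u.1, a u.1 * u.2 + b u.1)) = ∫ u, F u := by
  set G : (ℝ × ℝ) × ℝ → ℂ := fun u => (a u.1 : ℂ) * F (u.1, a u.1 * u.2 + b u.1) with hGdef
  have hGc : Continuous G := by
    apply Continuous.mul
    · exact Complex.continuous_ofReal.comp (ha.comp continuous_fst)
    · exact hF.comp ((continuous_fst).prodMk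
        (((ha.comp continuous_fst).mul continuous_snd).add (hb.comp continuous_fst)))
  have fiber_int : ∀ x : ℝ × ℝ,
      (Integrable (fun y => G (x, y)) ↔ Integrable (fun y => F (x, y))) := by
    intro x
    have h0 : ((a x : ℝ) : ℂ) ≠ 0 := by
      exact_mod_cast (hpos x).ne'
    have e1 : (Integrable (fun y => G (x, y)) ↔ Integrable (fun y => F (x, a x * y + b x))) := by
      simpa [hGdef, Pi.smul_def, smul_eq_mul] using
        integrable_smul_iff h0 (fun y : ℝ => F (x, a x * y + b x))
    have e2 : Integrable (fun y : ℝ => F (x, a x * y + b x)) ↔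
        Integrable (fun y : ℝ => F (x, y + b x)) :=
      integrable_comp_mul_left_iff (fun y => F (x, y + b x)) (hpos x).ne'
    have e3 : Integrable (fun y : ℝ => F (x, y + b x)) ↔ Integrable (fun y : ℝ => F (x, y)) :=
      (measurePreserving_add_right volume (b x)).integrable_comp_emb
        (MeasurableEquiv.addRight (b x)).measurableEmbedding (g := fun y : ℝ => F (x, y))
    exact e1.trans (e2.trans e3)
  have norm_eq : ∀ x : ℝ × ℝ, (∫ y, ‖G (x, y)‖) = ∫ y, ‖F (x, y)‖ := by
    intro x
    have h1 : (fun y => ‖G (x, y)‖) = fun y => a x * ‖F (x, a x * y + b x)‖ := by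
      funext y
      simp [hGdef, norm_mul, Complex.norm_real, abs_of_pos (hpos x)]
    rw [h1, MeasureTheory.integral_const_mul]
    rw [Measure.integral_comp_mul_left (fun y => ‖F (x, y + b x)‖) (a x),
      integral_add_right_eq_self (fun y => ‖F (x, y)‖) (b x)]
    rw [smul_eq_mul, abs_of_pos (inv_pos.2 (hpos x)), ← mul_assoc,
      mul_inv_cancel₀ (hpos x).ne', one_mul]
  have hiff : Integrable G ↔ Integrable F := by
    rw [show (volume : Measure ((ℝ × ℝ) × ℝ)) = (volume : Measure (ℝ × ℝ)).prod volume from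
      Measure.volume_eq_prod _ _,
      integrable_prod_iff hGc.aestronglyMeasurable,
      integrable_prod_iff hF.aestronglyMeasurable]
    apply and_congr
    · exact Filter.eventually_congr (Filter.Eventually.of_forall fiber_int)
    · constructor
      · intro h; exact h.congr (Filter.Eventually.of_forall fun x => (norm_eq x))
      · intro h; exact h.congr (Filter.Eventually.of_forall fun x => (norm_eq x).symm)
  refine ⟨hiff, ?_⟩
  by_cases hFi : Integrable F
  · have hGi : Integrable G := hiff.mpr hFi
    rw [show (volume : Measure ((ℝ × ℝ) × ℝ)) = (volume : Measure (ℝ × ℝ)).prod volume from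
      Measure.volume_eq_prod _ _] at hGi hFi ⊢
    rw [integral_prod _ hGi, integral_prod _ hFi]
    congr 1
    funext x
    calc ∫ y, G (x, y)
        = (a x : ℂ) • ∫ y, F (x, a x * y + b x) := by
          rw [← integral_smul]; simp [hGdef, smul_eq_mul]
      _ = (a x : ℂ) • (|(a x)⁻¹| • ∫ y, F (x, y + b x)) := by
          rw [Measure.integral_comp_mul_left (fun y => F (x, y + b x)) (a x)]
      _ = ∫ y, F (x, y) := by
          rw [integral_add_right_eq_self (fun y => F (x, y)) (b x),
            abs_of_pos (inv_pos.2 (hpos x)), Complex.real_smul, smul_eq_mul, ← mul_assoc,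
            ← Complex.ofReal_mul, mul_inv_cancel₀ (hpos x).ne', Complex.ofReal_one, one_mul]
  · rw [integral_undef hFi, integral_undef (fun h => hFi (hiff.mp h))]

private lemma JW_swapT (f : ℝ × ℝ × ℝ → ℂ) :
    (Integrable f ↔ Integrable fun v : (ℝ × ℝ) × ℝ => f (v.2, v.1)) ∧
    (∫ u, f u) = ∫ v : (ℝ × ℝ) × ℝ, f (v.2, v.1) := by
  have hmp : MeasurePreserving (Prod.swap : (ℝ × ℝ) × ℝ → ℝ × (ℝ × ℝ))
      ((volume : Measure (ℝ × ℝ)).prod volume) ((volume : Measure ℝ).prod volume) :=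
    Measure.measurePreserving_swap
  have hv1 : (volume : Measure ((ℝ × ℝ) × ℝ)) = (volume : Measure (ℝ × ℝ)).prod volume :=
    Measure.volume_eq_prod _ _
  have hv2 : (volume : Measure (ℝ × ℝ × ℝ)) = (volume : Measure ℝ).prod volume :=
    Measure.volume_eq_prod _ _
  constructor
  · rw [hv1, hv2]
    exact (hmp.integrable_comp_emb
      (MeasurableEquiv.prodComm (α := ℝ × ℝ) (β := ℝ)).measurableEmbedding (g := f)).symm
  · rw [hv1, hv2]
    exact (hmp.integral_comp
      (MeasurableEquiv.prodComm (α := ℝ × ℝ) (β := ℝ)).measurableEmbedding f).symm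

private lemma JW_assocT (f : ℝ × ℝ × ℝ → ℂ) :
    (Integrable f ↔ Integrable fun v : (ℝ × ℝ) × ℝ => f (v.1.1, v.1.2, v.2)) ∧
    (∫ u, f u) = ∫ v : (ℝ × ℝ) × ℝ, f (v.1.1, v.1.2, v.2) := by
  have hmp : MeasurePreserving (MeasurableEquiv.prodAssoc : (ℝ × ℝ) × ℝ ≃ᵐ ℝ × ℝ × ℝ)
      (((volume : Measure ℝ).prod volume).prod volume)
      ((volume : Measure ℝ).prod ((volume : Measure ℝ).prod volume)) :=
    measurePreserving_prodAssoc _ _ _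
  have hv1 : (volume : Measure ((ℝ × ℝ) × ℝ))
      = ((volume : Measure ℝ).prod volume).prod volume := by
    rw [Measure.volume_eq_prod, Measure.volume_eq_prod]
  have hv2 : (volume : Measure (ℝ × ℝ × ℝ)) = (volume : Measure ℝ).prod
      ((volume : Measure ℝ).prod volume) := by
    rw [Measure.volume_eq_prod, Measure.volume_eq_prod]
  constructor
  · rw [hv1, hv2]
    exact (hmp.integrable_comp_emb
      (MeasurableEquiv.prodAssoc).measurableEmbedding (g := f)).symm
  · rw [hv1, hv2]
    exact (hmp.integral_comp (MeasurableEquiv.prodAssoc).measurableEmbedding f).symm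

private lemma JW_keypt (μ₁ μ₂ μ₃ : ℂ) (y₁ y₂ u₁ u₂ u₃ : ℝ) :
    ((1 + u₁ ^ 2 : ℝ) : ℂ) ^ ((-1 + μ₂ - μ₁) / 2) *
      ((1 + u₂ ^ 2 : ℝ) : ℂ) ^ ((-1 + μ₃ - μ₂) / 2) *
      ((1 + u₃ ^ 2 : ℝ) : ℂ) ^ ((-1 + μ₃ - μ₁) / 2) *
      Complex.exp (2 * (Real.pi : ℂ) * Complex.I *
        ((-y₁ * u₁ * Real.sqrt (1 + u₃ ^ 2) / Real.sqrt (1 + u₂ ^ 2) -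
          y₁ * u₂ * u₃ / Real.sqrt (1 + u₂ ^ 2) - y₂ * u₂ : ℝ) : ℂ)) =
    ((Real.sqrt (1 + u₃ ^ 2) / Real.sqrt (1 + u₂ ^ 2) : ℝ) : ℂ) *
      (((Real.sqrt (1 + u₂ ^ 2) : ℝ)) : ℂ) *
      (((1 + u₂ ^ 2 + (Real.sqrt (1 + u₂ ^ 2) * u₃) ^ 2 : ℝ) : ℂ) ^ ((-1 + μ₃ - μ₂) / 2) *
        ((1 + (Real.sqrt (1 + u₃ ^ 2) / Real.sqrt (1 + u₂ ^ 2) * u₁ +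
            u₂ * u₃ / Real.sqrt (1 + u₂ ^ 2)) ^ 2 +
          (Real.sqrt (1 + u₂ ^ 2) * u₃ -
            (Real.sqrt (1 + u₃ ^ 2) / Real.sqrt (1 + u₂ ^ 2) * u₁ +
             u₂ * u₃ / Real.sqrt (1 + u₂ ^ 2)) * u₂) ^ 2 : ℝ) : ℂ) ^ ((-1 + μ₂ - μ₁) / 2) *
        Complex.exp (2 * (Real.pi : ℂ) * Complex.I *
          ((-y₁ * (Real.sqrt (1 + u₃ ^ 2) / Real.sqrt (1 + u₂ ^ 2) * u₁ +
             u₂ * u₃ / Real.sqrt (1 + u₂ ^ 2)) - y₂ * u₂ : ℝ) : ℂ))) := by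
  set s := Real.sqrt (1 + u₂ ^ 2) with hsdef
  set t := Real.sqrt (1 + u₃ ^ 2) with htdef
  have hs2 : s ^ 2 = 1 + u₂ ^ 2 := Real.sq_sqrt (by positivity)
  have ht2 : t ^ 2 = 1 + u₃ ^ 2 := Real.sq_sqrt (by positivity)
  have hspos : 0 < s := Real.sqrt_pos.2 (by positivity)
  have htpos : 0 < t := Real.sqrt_pos.2 (by positivity)
  have hvdef : t / s * u₁ + u₂ * u₃ / s = (t * u₁ + u₂ * u₃) / s := by ring
  rw [hvdef]
  set v := (t * u₁ + u₂ * u₃) / s with hv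
  have hvs : v * s = t * u₁ + u₂ * u₃ := div_mul_cancel₀ _ hspos.ne'
  have R1 : 1 + u₂ ^ 2 + (s * u₃) ^ 2 = (1 + u₂ ^ 2) * (1 + u₃ ^ 2) := by
    rw [mul_pow, hs2]; ring
  have R2 : 1 + v ^ 2 + (s * u₃ - v * u₂) ^ 2 = (1 + u₁ ^ 2) * (1 + u₃ ^ 2) := by
    have hc := pow_ne_zero 2 hspos.ne'
    apply mul_right_cancel₀ hc
    have hexp : (1 + v ^ 2 + (s * u₃ - v * u₂) ^ 2) * s ^ 2
        = s ^ 2 + (v * s) ^ 2 + (s ^ 2 * u₃ - v * s * u₂) ^ 2 := by ring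
    rw [hexp, hvs, hs2]
    linear_combination ((1 + u₂ ^ 2) * u₁ ^ 2) * ht2
  have R3 : -y₁ * v - y₂ * u₂ = -y₁ * u₁ * t / s - y₁ * u₂ * u₃ / s - y₂ * u₂ := by
    rw [hv]; ring
  rw [R1, R2, R3]
  rw [Complex.ofReal_mul, Complex.ofReal_mul,
    Complex.mul_cpow_ofReal_nonneg (by positivity) (by positivity),
    Complex.mul_cpow_ofReal_nonneg (by positivity) (by positivity)]
  rw [← Complex.ofReal_mul, div_mul_cancel₀ _ hspos.ne']
  have hbase : ((1 + u₃ ^ 2 : ℝ) : ℂ) ≠ 0 := by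
    exact_mod_cast (by positivity : (0:ℝ) < 1 + u₃ ^ 2).ne'
  have hts : (t : ℂ) = ((1 + u₃ ^ 2 : ℝ) : ℂ) ^ (((1:ℝ)/2 : ℝ) : ℂ) := by
    rw [← Complex.ofReal_cpow (by positivity), htdef, Real.sqrt_eq_rpow]
  have hsum : ((1 + u₃ ^ 2 : ℝ) : ℂ) ^ ((-1 + μ₃ - μ₁) / 2)
      = ((1 + u₃ ^ 2 : ℝ) : ℂ) ^ (((1:ℝ)/2 : ℝ) : ℂ)
        * ((1 + u₃ ^ 2 : ℝ) : ℂ) ^ ((-1 + μ₃ - μ₂) / 2)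
        * ((1 + u₃ ^ 2 : ℝ) : ℂ) ^ ((-1 + μ₂ - μ₁) / 2) := by
    rw [← Complex.cpow_add _ _ hbase, ← Complex.cpow_add _ _ hbase]
    congr 1
    push_cast
    ring
  rw [hsum, hts]
  ring

/-- The substituted form of the spherical long-element Jacquet–Whittaker integral:
both triple integrals converge absolutely and are equal, for `Re μ₁ > Re μ₂ > Re μ₃`.
Here `u = (u₁, u₂, u₃)` and `e(t) = exp(2πit)`. -/
theorem stmt_14 (μ₁ μ₂ μ₃ : ℂ) (h12 : μ₂.re < μ₁.re) (h23 : μ₃.re < μ₂.re) (y₁ y₂ : ℝ) :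
    let f : ℝ × ℝ × ℝ → ℂ := fun u =>
      ((1 + u.2.1 ^ 2 + u.2.2 ^ 2 : ℝ) : ℂ) ^ ((-1 + μ₃ - μ₂) / 2) *
        ((1 + u.1 ^ 2 + (u.2.2 - u.1 * u.2.1) ^ 2 : ℝ) : ℂ) ^ ((-1 + μ₂ - μ₁) / 2) *
        Complex.exp (2 * (Real.pi : ℂ) * Complex.I * ((-y₁ * u.1 - y₂ * u.2.1 : ℝ) : ℂ))
    let g : ℝ × ℝ × ℝ → ℂ := fun u =>
      ((1 + u.1 ^ 2 : ℝ) : ℂ) ^ ((-1 + μ₂ - μ₁) / 2) *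
        ((1 + u.2.1 ^ 2 : ℝ) : ℂ) ^ ((-1 + μ₃ - μ₂) / 2) *
        ((1 + u.2.2 ^ 2 : ℝ) : ℂ) ^ ((-1 + μ₃ - μ₁) / 2) *
        Complex.exp (2 * (Real.pi : ℂ) * Complex.I *
          ((-y₁ * u.1 * Real.sqrt (1 + u.2.2 ^ 2) / Real.sqrt (1 + u.2.1 ^ 2) -
            y₁ * u.2.1 * u.2.2 / Real.sqrt (1 + u.2.1 ^ 2) - y₂ * u.2.1 : ℝ) : ℂ))
    Integrable f ∧ Integrable g ∧ (∫ u : ℝ × ℝ × ℝ, f u) = ∫ u : ℝ × ℝ × ℝ, g u := by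
  intro f g
  -- basic continuity helpers
  have hslit : ∀ {h : ℝ × ℝ × ℝ → ℝ}, Continuous h → (∀ x, 0 < h x) →
      ∀ (c : ℂ), Continuous (fun u : ℝ × ℝ × ℝ => ((h u : ℝ) : ℂ) ^ c) := by
    intro h hh hp c
    exact Continuous.cpow (Complex.continuous_ofReal.comp hh) continuous_const
      (fun x => Complex.ofReal_mem_slitPlane.2 (hp x))
  have hexp_cont : ∀ {h : ℝ × ℝ × ℝ → ℝ}, Continuous h →
      Continuous (fun u : ℝ × ℝ × ℝ =>
        Complex.exp (2 * (Real.pi : ℂ) * Complex.I * ((h u : ℝ) : ℂ))) := by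
    intro h hh
    exact Complex.continuous_exp.comp (continuous_const.mul (Complex.continuous_ofReal.comp hh))
  have hsqrt2 : Continuous (fun u : ℝ × ℝ × ℝ => Real.sqrt (1 + u.2.1 ^ 2)) :=
    Real.continuous_sqrt.comp (by fun_prop)
  have hsqrt2ne : ∀ u : ℝ × ℝ × ℝ, Real.sqrt (1 + u.2.1 ^ 2) ≠ 0 :=
    fun u => (Real.sqrt_pos.2 (by positivity)).ne'
  have hf_cont : Continuous f := by
    refine ((hslit (by fun_prop) (fun x => by positivity) _).mul
      (hslit (by fun_prop) (fun x => by positivity) _)).mul (hexp_cont (by fun_prop))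
  have hg_cont : Continuous g := by
    refine (((hslit (by fun_prop) (fun x => by positivity) _).mul
      (hslit (by fun_prop) (fun x => by positivity) _)).mul
      (hslit (by fun_prop) (fun x => by positivity) _)).mul (hexp_cont ?_)
    apply Continuous.sub
    apply Continuous.sub
    · exact Continuous.div (by fun_prop) hsqrt2 hsqrt2ne
    · exact Continuous.div (by fun_prop) hsqrt2 hsqrt2ne
    · fun_prop
  -- the intermediate function
  set f2 : ℝ × ℝ × ℝ → ℂ := fun u =>
    ((Real.sqrt (1 + u.2.1 ^ 2) : ℝ) : ℂ) *
      f (u.1, u.2.1, Real.sqrt (1 + u.2.1 ^ 2) * u.2.2) with hf2def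
  have hf2_cont : Continuous f2 := by
    apply Continuous.mul (Complex.continuous_ofReal.comp hsqrt2)
    apply hf_cont.comp
    apply Continuous.prodMk continuous_fst
    exact Continuous.prodMk (by fun_prop) (hsqrt2.mul (by fun_prop))
  -- Step A : Integrable f2 ↔ Integrable f, ∫ f2 = ∫ f
  have hFA_cont : Continuous (fun v : (ℝ × ℝ) × ℝ => f (v.1.1, v.1.2, v.2)) :=
    hf_cont.comp (by fun_prop)
  have hA := JW_core hFA_cont
    (a := fun w : ℝ × ℝ => Real.sqrt (1 + w.2 ^ 2)) (b := fun _ => (0:ℝ))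
    (Real.continuous_sqrt.comp (by fun_prop)) continuous_const
    (fun w => Real.sqrt_pos.2 (by positivity))
  simp only [add_zero] at hA
  have eA : (fun v : (ℝ × ℝ) × ℝ => f2 (v.1.1, v.1.2, v.2))
      = fun v : (ℝ × ℝ) × ℝ => ((Real.sqrt (1 + v.1.2 ^ 2) : ℝ) : ℂ) *
          f (v.1.1, v.1.2, Real.sqrt (1 + v.1.2 ^ 2) * v.2) := rfl
  have hA_int : Integrable f2 ↔ Integrable f := by
    rw [(JW_assocT f2).1, (JW_assocT f).1, eA]
    exact hA.1
  have hA_eq : (∫ u, f2 u) = ∫ u, f u := by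
    rw [(JW_assocT f2).2, (JW_assocT f).2, eA]
    exact hA.2
  -- Step B : Integrable g ↔ Integrable f2, ∫ g = ∫ f2
  have hFB_cont : Continuous (fun v : (ℝ × ℝ) × ℝ => f2 (v.2, v.1)) :=
    hf2_cont.comp (by fun_prop)
  have haB_cont : Continuous (fun w : ℝ × ℝ => Real.sqrt (1 + w.2 ^ 2) / Real.sqrt (1 + w.1 ^ 2)) :=
    Continuous.div (Real.continuous_sqrt.comp (by fun_prop))
      (Real.continuous_sqrt.comp (by fun_prop))
      (fun w => (Real.sqrt_pos.2 (by positivity)).ne')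
  have hbB_cont : Continuous (fun w : ℝ × ℝ => w.1 * w.2 / Real.sqrt (1 + w.1 ^ 2)) :=
    Continuous.div (by fun_prop)
      (Real.continuous_sqrt.comp (by fun_prop))
      (fun w => (Real.sqrt_pos.2 (by positivity)).ne')
  have hB := JW_core hFB_cont haB_cont hbB_cont
    (fun w => div_pos (Real.sqrt_pos.2 (by positivity)) (Real.sqrt_pos.2 (by positivity)))
  have eB : (fun v : (ℝ × ℝ) × ℝ =>
        ((Real.sqrt (1 + v.1.2 ^ 2) / Real.sqrt (1 + v.1.1 ^ 2) : ℝ) : ℂ) *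
          f2 (Real.sqrt (1 + v.1.2 ^ 2) / Real.sqrt (1 + v.1.1 ^ 2) * v.2 +
            v.1.1 * v.1.2 / Real.sqrt (1 + v.1.1 ^ 2), v.1))
      = fun v : (ℝ × ℝ) × ℝ => g (v.2, v.1) := by
    funext v
    rw [hf2def, ← mul_assoc]
    exact (JW_keypt μ₁ μ₂ μ₃ y₁ y₂ v.2 v.1.1 v.1.2).symm
  have hB_int : Integrable g ↔ Integrable f2 := by
    rw [(JW_swapT g).1, ← eB, (JW_swapT f2).1]
    exact hB.1
  have hB_eq : (∫ u, g u) = ∫ u, f2 u := by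
    rw [(JW_swapT g).2, ← eB, (JW_swapT f2).2]
    exact hB.2
  -- Integrability of g
  have hre : ∀ z : ℂ, (z / 2).re = z.re / 2 := by
    intro z; simp [Complex.div_re, Complex.normSq]
  have hq : ((-1 + μ₂ - μ₁) / 2).re < -(1/2) := by
    rw [hre]; simp only [Complex.sub_re, Complex.add_re, Complex.neg_re, Complex.one_re]
    linarith
  have hp : ((-1 + μ₃ - μ₂) / 2).re < -(1/2) := by
    rw [hre]; simp only [Complex.sub_re, Complex.add_re, Complex.neg_re, Complex.one_re]
    linarith
  have hrr : ((-1 + μ₃ - μ₁) / 2).re < -(1/2) := by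
    rw [hre]; simp only [Complex.sub_re, Complex.add_re, Complex.neg_re, Complex.one_re]
    linarith
  have hB23 : Integrable (fun w : ℝ × ℝ =>
      (1 + w.1 ^ 2) ^ ((-1 + μ₃ - μ₂) / 2).re * (1 + w.2 ^ 2) ^ ((-1 + μ₃ - μ₁) / 2).re) := by
    rw [show (volume : Measure (ℝ × ℝ)) = (volume : Measure ℝ).prod volume from
      Measure.volume_eq_prod _ _]
    exact (JW_int1d hp).mul_prod (JW_int1d hrr)
  have hBnd : Integrable (fun u : ℝ × ℝ × ℝ =>
      (1 + u.1 ^ 2) ^ ((-1 + μ₂ - μ₁) / 2).re *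
        ((1 + u.2.1 ^ 2) ^ ((-1 + μ₃ - μ₂) / 2).re *
         (1 + u.2.2 ^ 2) ^ ((-1 + μ₃ - μ₁) / 2).re)) := by
    rw [show (volume : Measure (ℝ × ℝ × ℝ)) = (volume : Measure ℝ).prod volume from
      Measure.volume_eq_prod _ _]
    exact (JW_int1d hq).mul_prod hB23
  have habs1 : ∀ x : ℝ, ‖Complex.exp (2 * (Real.pi : ℂ) * Complex.I * (x : ℂ))‖ = 1 := by
    intro x
    rw [Complex.norm_exp]
    have : (2 * (Real.pi : ℂ) * Complex.I * (x : ℂ)).re = 0 := by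
      simp [Complex.mul_re, Complex.mul_im]
    rw [this, Real.exp_zero]
  have hg_int : Integrable g := by
    refine hBnd.mono' hg_cont.aestronglyMeasurable (Filter.Eventually.of_forall fun u => ?_)
    have h1 : (0:ℝ) < 1 + u.1 ^ 2 := by positivity
    have h2 : (0:ℝ) < 1 + u.2.1 ^ 2 := by positivity
    have h3 : (0:ℝ) < 1 + u.2.2 ^ 2 := by positivity
    have : ‖g u‖ = (1 + u.1 ^ 2) ^ ((-1 + μ₂ - μ₁) / 2).re *
        ((1 + u.2.1 ^ 2) ^ ((-1 + μ₃ - μ₂) / 2).re *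
         (1 + u.2.2 ^ 2) ^ ((-1 + μ₃ - μ₁) / 2).re) := by
      rw [show g u = ((1 + u.1 ^ 2 : ℝ) : ℂ) ^ ((-1 + μ₂ - μ₁) / 2) *
        ((1 + u.2.1 ^ 2 : ℝ) : ℂ) ^ ((-1 + μ₃ - μ₂) / 2) *
        ((1 + u.2.2 ^ 2 : ℝ) : ℂ) ^ ((-1 + μ₃ - μ₁) / 2) *
        Complex.exp (2 * (Real.pi : ℂ) * Complex.I *
          ((-y₁ * u.1 * Real.sqrt (1 + u.2.2 ^ 2) / Real.sqrt (1 + u.2.1 ^ 2) -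
            y₁ * u.2.1 * u.2.2 / Real.sqrt (1 + u.2.1 ^ 2) - y₂ * u.2.1 : ℝ) : ℂ)) from rfl]
      rw [norm_mul, norm_mul, norm_mul]
      rw [Complex.norm_cpow_eq_rpow_re_of_pos h1, Complex.norm_cpow_eq_rpow_re_of_pos h2,
        Complex.norm_cpow_eq_rpow_re_of_pos h3, habs1]
      ring
    rw [this]
  refine ⟨hA_int.mp (hB_int.mp hg_int), hg_int, ?_⟩
  rw [← hA_eq]
  exact hB_eq.symm
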